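/- (Exact conservation of a modified energy.) Consider the linear oscillatory system q̈ = −Ω²q − Aq with A ∈ ℂ^{d×d} self-adjoint, discretized by the trigonometric integrator with filters satisfying ψ₁ = sinc · φ. Then the modified energy ℋ(q, q̇) = (1/2)‖Ω q‖² + (1/2)‖q̇‖² + (1/2) Re((cos(hΩ) Φ q)^* A Φ q) − (1/8) h² ‖Ψ₁ A Φ q‖² is exactly preserved: ℋ(q_{n+1}, q̇_{n+1}) = ℋ(q_n, q̇_n) for every step. -/

import Mathlib

open scoped BigOperators

/-- `sinc ξ = sin ξ / ξ` with `sinc 0 = 1`. -/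
noncomputable def sinc (x : ℝ) : ℝ := if x = 0 then 1 else Real.sin x / x

/-- Entrywise (diagonal-matrix) action of a real function family on `ℂ^d`. -/
noncomputable def dOp {d : ℕ} (f : Fin d → ℝ) (q : EuclideanSpace ℂ (Fin d)) :
    EuclideanSpace ℂ (Fin d) := WithLp.toLp 2 (fun i => (f i : ℂ) * q i)

/-- Position update of the trigonometric integrator for the linear force `g(q) = -A q`:
`q_{n+1} = cos(hΩ) q_n + h sinc(hΩ) q̇_n + ½h² sinc(hΩ) Ψ₁ g(Φ q_n)`. -/
noncomputable def trigStepQ {d : ℕ} (h : ℝ) (ω : Fin d → ℝ) (ψ₁ φ : ℝ → ℝ)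
    (A : EuclideanSpace ℂ (Fin d) →L[ℂ] EuclideanSpace ℂ (Fin d))
    (q p : EuclideanSpace ℂ (Fin d)) : EuclideanSpace ℂ (Fin d) :=
  dOp (fun i => Real.cos (h * ω i)) q + h • dOp (fun i => sinc (h * ω i)) p
    + (h ^ 2 / 2) • dOp (fun i => sinc (h * ω i))
        (dOp (fun i => ψ₁ (h * ω i)) (-(A (dOp (fun i => φ (h * ω i)) q))))

/-- Velocity update of the trigonometric integrator for the linear force `g(q) = -A q`:
`q̇_{n+1} = -Ω sin(hΩ) q_n + cos(hΩ) q̇_n + ½h (cos(hΩ) Ψ₁ g(Φ q_n) + Ψ₁ g(Φ q_{n+1}))`. -/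
noncomputable def trigStepP {d : ℕ} (h : ℝ) (ω : Fin d → ℝ) (ψ₁ φ : ℝ → ℝ)
    (A : EuclideanSpace ℂ (Fin d) →L[ℂ] EuclideanSpace ℂ (Fin d))
    (q p : EuclideanSpace ℂ (Fin d)) : EuclideanSpace ℂ (Fin d) :=
  -(dOp (fun i => ω i * Real.sin (h * ω i)) q) + dOp (fun i => Real.cos (h * ω i)) p
    + (h / 2) • (dOp (fun i => Real.cos (h * ω i))
          (dOp (fun i => ψ₁ (h * ω i)) (-(A (dOp (fun i => φ (h * ω i)) q))))
        + dOp (fun i => ψ₁ (h * ω i))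
            (-(A (dOp (fun i => φ (h * ω i)) (trigStepQ h ω ψ₁ φ A q p)))))

/-- The modified energy
`ℋ(q,q̇) = ½‖Ωq‖² + ½‖q̇‖² + ½ Re((cos(hΩ)Φq)* A Φq) − ⅛h²‖Ψ₁ A Φq‖²`. -/
noncomputable def modEnergy {d : ℕ} (h : ℝ) (ω : Fin d → ℝ) (ψ₁ φ : ℝ → ℝ)
    (A : EuclideanSpace ℂ (Fin d) →L[ℂ] EuclideanSpace ℂ (Fin d))
    (q p : EuclideanSpace ℂ (Fin d)) : ℝ :=
  (1 / 2) * ‖dOp ω q‖ ^ 2 + (1 / 2) * ‖p‖ ^ 2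
    + (1 / 2) * (inner (𝕜 := ℂ) (dOp (fun i => Real.cos (h * ω i)) (dOp (fun i => φ (h * ω i)) q))
        (A (dOp (fun i => φ (h * ω i)) q))).re
    - (1 / 8) * h ^ 2 * ‖dOp (fun i => ψ₁ (h * ω i)) (A (dOp (fun i => φ (h * ω i)) q))‖ ^ 2

/-- The total energy `H(q,q̇) = ½‖Ωq‖² + ½‖q̇‖² + ½ q* A q` of `q̈ = -Ω²q - Aq`. -/
noncomputable def energy {d : ℕ} (ω : Fin d → ℝ)
    (A : EuclideanSpace ℂ (Fin d) →L[ℂ] EuclideanSpace ℂ (Fin d))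
    (q p : EuclideanSpace ℂ (Fin d)) : ℝ :=
  (1 / 2) * ‖dOp ω q‖ ^ 2 + (1 / 2) * ‖p‖ ^ 2 + (1 / 2) * (inner (𝕜 := ℂ) q (A q)).re

namespace MEC

lemma sin_eq_mul_sinc (x : ℝ) : Real.sin x = x * sinc x := by
  unfold sinc; split_ifs with h
  · simp [h]
  · field_simp

variable {d : ℕ}

/-- real part of the complex inner product -/
noncomputable def B (x y : EuclideanSpace ℂ (Fin d)) : ℝ := (inner (𝕜 := ℂ) x y).re

lemma B_self (x : EuclideanSpace ℂ (Fin d)) : B x x = ‖x‖ ^ 2 := by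
  unfold B; exact_mod_cast inner_self_eq_norm_sq (𝕜 := ℂ) x

lemma B_comm (x y : EuclideanSpace ℂ (Fin d)) : B x y = B y x := by
  unfold B; rw [← inner_conj_symm]; exact Complex.conj_re _

lemma B_add_left (x y z : EuclideanSpace ℂ (Fin d)) : B (x + y) z = B x z + B y z := by
  unfold B; rw [inner_add_left, Complex.add_re]

lemma B_add_right (x y z : EuclideanSpace ℂ (Fin d)) : B x (y + z) = B x y + B x z := by
  unfold B; rw [inner_add_right, Complex.add_re]

lemma B_smul_left (r : ℝ) (x y : EuclideanSpace ℂ (Fin d)) : B (r • x) y = r * B x y := by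
  unfold B
  have : (r : ℂ) • x = r • x := by
    ext i; show (r:ℂ) • x i = r • x i; simp [Complex.real_smul]
  rw [← this, inner_smul_left]
  simp

lemma B_smul_right (r : ℝ) (x y : EuclideanSpace ℂ (Fin d)) : B x (r • y) = r * B x y := by
  rw [B_comm, B_smul_left, B_comm]

lemma B_sub_right (x y z : EuclideanSpace ℂ (Fin d)) : B x (y - z) = B x y - B x z := by
  unfold B; rw [inner_sub_right, Complex.sub_re]

lemma B_sub_left (x y z : EuclideanSpace ℂ (Fin d)) : B (x - y) z = B x z - B y z := by
  unfold B; rw [inner_sub_left, Complex.sub_re]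

lemma B_dOp (f : Fin d → ℝ) (x y : EuclideanSpace ℂ (Fin d)) :
    B (dOp f x) y = B x (dOp f y) := by
  unfold B
  congr 1
  simp only [PiLp.inner_apply, RCLike.inner_apply, dOp, map_mul, Complex.conj_ofReal]
  congr 1; funext i; ring

lemma B_A (A : EuclideanSpace ℂ (Fin d) →L[ℂ] EuclideanSpace ℂ (Fin d))
    (hA : IsSelfAdjoint A) (x y : EuclideanSpace ℂ (Fin d)) : B (A x) y = B x (A y) := by
  unfold B
  exact congrArg Complex.re ((ContinuousLinearMap.isSelfAdjoint_iff_isSymmetric.mp hA) x y)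

lemma B_sq_add (x y : EuclideanSpace ℂ (Fin d)) :
    B (x + y) (x + y) = B x x + 2 * B x y + B y y := by
  rw [B_add_left, B_add_right, B_add_right, B_comm y x]; ring

lemma B_sq_sub (x y : EuclideanSpace ℂ (Fin d)) :
    B (x - y) (x - y) = B x x - 2 * B x y + B y y := by
  rw [B_sub_left, B_sub_right, B_sub_right, B_comm y x]; ring

lemma dOp_dOp (f g : Fin d → ℝ) (x : EuclideanSpace ℂ (Fin d)) :
    dOp f (dOp g x) = dOp (fun i => f i * g i) x := by
  ext i; show (f i : ℂ) * ((g i : ℂ) * x i) = ((f i * g i : ℝ) : ℂ) * x i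
  push_cast; ring

lemma dOp_congr {f g : Fin d → ℝ} (hfg : ∀ i, f i = g i) (x : EuclideanSpace ℂ (Fin d)) :
    dOp f x = dOp g x := by
  ext i; show (f i : ℂ) * x i = (g i : ℂ) * x i; rw [hfg i]

lemma dOp_one (x : EuclideanSpace ℂ (Fin d)) : dOp (fun _ => (1:ℝ)) x = x := by
  ext i; show ((1:ℝ) : ℂ) * x i = x i; simp


-- componentwise evaluation helpers
lemma dOp_apply (f : Fin d → ℝ) (x : EuclideanSpace ℂ (Fin d)) (i : Fin d) :
    dOp f x i = (f i : ℂ) * x i := rfl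

lemma add_apply (x y : EuclideanSpace ℂ (Fin d)) (i : Fin d) : (x + y) i = x i + y i := rfl
lemma sub_apply (x y : EuclideanSpace ℂ (Fin d)) (i : Fin d) : (x - y) i = x i - y i := rfl
lemma neg_apply (x : EuclideanSpace ℂ (Fin d)) (i : Fin d) : (-x) i = -(x i) := rfl
lemma smul_apply (r : ℝ) (x : EuclideanSpace ℂ (Fin d)) (i : Fin d) :
    (r • x) i = (r : ℂ) * x i := by
  show r • x i = (r:ℂ) * x i; rw [Complex.real_smul]

/-- V1: `Ω q' = cos(hΩ) Ωq + sin(hΩ) m`. -/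
lemma V1 (h : ℝ) (c σ ψ w s : Fin d → ℝ) (hs : ∀ i, s i = h * w i * σ i)
    (q p a : EuclideanSpace ℂ (Fin d)) :
    dOp w (dOp c q + h • dOp σ p + (h ^ 2 / 2) • dOp σ (dOp ψ (-a)))
      = dOp c (dOp w q) + dOp s (p - (h / 2) • dOp ψ a) := by
  ext i
  simp only [dOp_apply, add_apply, sub_apply, neg_apply, smul_apply, hs i]
  push_cast
  ring

/-- V2: `p'` in rotated form. -/
lemma V2 (h : ℝ) (c ψ w s : Fin d → ℝ) (q p a a' : EuclideanSpace ℂ (Fin d)) :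
    -(dOp (fun i => w i * s i) q) + dOp c p
        + (h / 2) • (dOp c (dOp ψ (-a)) + dOp ψ (-a'))
      = (-(dOp s (dOp w q)) + dOp c (p - (h / 2) • dOp ψ a)) + (-(h / 2)) • dOp ψ a' := by
  ext i
  simp only [dOp_apply, add_apply, sub_apply, neg_apply, smul_apply]
  push_cast
  ring

/-- V3: `cos(hΩ) Φ q' - h Ψ₁ v = Φ q`. -/
lemma V3 (h : ℝ) (c σ ψ w s f : Fin d → ℝ) (hs : ∀ i, s i = h * w i * σ i)
    (hψ : ∀ i, ψ i = σ i * f i) (hcs : ∀ i, c i ^ 2 + s i ^ 2 = 1)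
    (q p a : EuclideanSpace ℂ (Fin d)) :
    dOp c (dOp f (dOp c q + h • dOp σ p + (h ^ 2 / 2) • dOp σ (dOp ψ (-a))))
        - h • dOp ψ (-(dOp s (dOp w q)) + dOp c (p - (h / 2) • dOp ψ a))
      = dOp f q := by
  ext i
  have key : ((c i : ℂ)) ^ 2 + ((h : ℂ) * (w i : ℂ) * (σ i : ℂ)) ^ 2 = 1 := by
    have : c i ^ 2 + (h * w i * σ i) ^ 2 = 1 := by rw [← hs i]; exact hcs i
    exact_mod_cast this
  simp only [dOp_apply, add_apply, sub_apply, neg_apply, smul_apply, hψ i, hs i]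
  push_cast
  linear_combination (f i : ℂ) * q i * key

/-- V4: `Φ q' = cos(hΩ) Φq + h Ψ₁ m`. -/
lemma V4 (h : ℝ) (c σ ψ f : Fin d → ℝ) (hψ : ∀ i, ψ i = σ i * f i)
    (q p a : EuclideanSpace ℂ (Fin d)) :
    dOp f (dOp c q + h • dOp σ p + (h ^ 2 / 2) • dOp σ (dOp ψ (-a)))
      = dOp c (dOp f q) + h • dOp ψ (p - (h / 2) • dOp ψ a) := by
  ext i
  simp only [dOp_apply, add_apply, sub_apply, neg_apply, smul_apply, hψ i]
  push_cast
  ring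

/-- rotation invariance of `½‖x‖²+½‖m‖²`. -/
lemma rot (c s : Fin d → ℝ) (hcs : ∀ i, c i ^ 2 + s i ^ 2 = 1)
    (x m : EuclideanSpace ℂ (Fin d)) :
    B (dOp c x + dOp s m) (dOp c x + dOp s m)
      + B (-(dOp s x) + dOp c m) (-(dOp s x) + dOp c m) = B x x + B m m := by
  have hx : B (dOp c x) (dOp c x) + B (dOp s x) (dOp s x) = B x x := by
    rw [B_dOp, B_dOp, dOp_dOp, dOp_dOp]
    unfold B
    rw [← Complex.add_re, ← inner_add_right]
    have : dOp (fun i => c i * c i) x + dOp (fun i => s i * s i) x = x := by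
      ext i
      simp only [dOp_apply, add_apply]
      have : c i * c i + s i * s i = 1 := by have := hcs i; nlinarith [hcs i]
      have h2 : ((c i * c i : ℝ) : ℂ) + ((s i * s i : ℝ) : ℂ) = 1 := by exact_mod_cast this
      calc (↑(c i * c i) : ℂ) * x i + (↑(s i * s i):ℂ) * x i
          = ((↑(c i * c i) : ℂ) + ↑(s i * s i)) * x i := by ring
        _ = x i := by rw [h2, one_mul]
    rw [this]
  have hm : B (dOp c m) (dOp c m) + B (dOp s m) (dOp s m) = B m m := by
    rw [B_dOp, B_dOp, dOp_dOp, dOp_dOp]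
    unfold B
    rw [← Complex.add_re, ← inner_add_right]
    have : dOp (fun i => c i * c i) m + dOp (fun i => s i * s i) m = m := by
      ext i
      simp only [dOp_apply, add_apply]
      have : c i * c i + s i * s i = 1 := by nlinarith [hcs i]
      have h2 : ((c i * c i : ℝ) : ℂ) + ((s i * s i : ℝ) : ℂ) = 1 := by exact_mod_cast this
      calc (↑(c i * c i) : ℂ) * m i + (↑(s i * s i):ℂ) * m i
          = ((↑(c i * c i) : ℂ) + ↑(s i * s i)) * m i := by ring
        _ = m i := by rw [h2, one_mul]
    rw [this]
  have hcross : B (dOp c x) (dOp s m) = B (dOp s x) (dOp c m) := by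
    rw [B_dOp, B_dOp, dOp_dOp, dOp_dOp]
    exact congrArg _ (dOp_congr (fun i => mul_comm _ _) m)
  have e1 := B_sq_add (dOp c x) (dOp s m)
  have e2 := B_sq_add (-(dOp s x)) (dOp c m)
  have hneg : B (-(dOp s x)) (-(dOp s x)) = B (dOp s x) (dOp s x) := by
    unfold B; rw [inner_neg_neg]
  have hneg2 : B (-(dOp s x)) (dOp c m) = -B (dOp s x) (dOp c m) := by
    unfold B; rw [inner_neg_left]; simp
  linarith


lemma oneStep (h : ℝ) (c s σ ψ f w : Fin d → ℝ)
    (hs : ∀ i, s i = h * w i * σ i) (hψ : ∀ i, ψ i = σ i * f i)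
    (hcs : ∀ i, c i ^ 2 + s i ^ 2 = 1)
    (A : EuclideanSpace ℂ (Fin d) →L[ℂ] EuclideanSpace ℂ (Fin d))
    (hA : IsSelfAdjoint A) (q p Q' P' : EuclideanSpace ℂ (Fin d))
    (hQ' : Q' = dOp c q + h • dOp σ p + (h ^ 2 / 2) • dOp σ (dOp ψ (-(A (dOp f q)))))
    (hP' : P' = -(dOp (fun i => w i * s i) q) + dOp c p
        + (h / 2) • (dOp c (dOp ψ (-(A (dOp f q)))) + dOp ψ (-(A (dOp f Q'))))) :
    (1/2) * B (dOp w Q') (dOp w Q') + (1/2) * B P' P'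
      + (1/2) * B (dOp c (dOp f Q')) (A (dOp f Q'))
      - (1/8) * h^2 * B (dOp ψ (A (dOp f Q'))) (dOp ψ (A (dOp f Q'))) =
    (1/2) * B (dOp w q) (dOp w q) + (1/2) * B p p
      + (1/2) * B (dOp c (dOp f q)) (A (dOp f q))
      - (1/8) * h^2 * B (dOp ψ (A (dOp f q))) (dOp ψ (A (dOp f q))) := by
  set r := dOp f q with hrdef
  set a := A r with hadef
  set u := dOp ψ a with hudef
  set m := p - (h/2) • u with hmdef
  set x := dOp w q with hxdef
  set r' := dOp f Q' with hr'def
  set a' := A r' with ha'def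
  set u' := dOp ψ a' with hu'def
  set x' := dOp w Q' with hx'def
  set v := -(dOp s x) + dOp c m with hvdef
  have e1 : B x' x' + B v v = B x x + B m m := by
    have h1 : x' = dOp c x + dOp s m := by
      rw [hx'def, hQ', hxdef, hmdef, hudef, hadef, hrdef]
      exact V1 h c σ ψ w s hs q p (A (dOp f q))
    rw [h1, hvdef]
    exact rot c s hcs x m
  have e2 : B P' P' = B v v - h * B v u' + h^2/4 * B u' u' := by
    have h2 : P' = v + (-(h/2)) • u' := by
      rw [hP', hvdef, hmdef, hudef, hu'def, hxdef, hadef, ha'def, hrdef, hr'def]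
      exact V2 h c ψ w s q p (A (dOp f q)) (A (dOp f Q'))
    rw [h2, B_sq_add]
    simp only [B_smul_left, B_smul_right]
    ring
  have e3 : B m m = B p p - h * B p u + h^2/4 * B u u := by
    rw [hmdef, B_sq_sub]
    simp only [B_smul_left, B_smul_right]
    ring
  have e4 : B (dOp c r') a' = B r a' + h * B v u' := by
    have h4 : dOp c r' - h • dOp ψ v = r := by
      rw [hr'def, hQ', hvdef, hmdef, hudef, hxdef, hrdef, hadef]
      rw [hrdef]
      exact V3 h c σ ψ w s f hs hψ hcs q p (A (dOp f q))
    have h5 : dOp c r' = r + h • dOp ψ v := eq_add_of_sub_eq' (by rw [← h4]; abel)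
    rw [h5, B_add_left, B_smul_left, B_dOp ψ v a', ← hu'def]
  have e5 : B r a' = B (dOp c r) a + h * B p u - h^2/2 * B u u := by
    have h6 : r' = dOp c r + h • dOp ψ m := by
      rw [hr'def, hQ', hmdef, hudef, hrdef, hadef, hrdef]
      exact V4 h c σ ψ f hψ q p (A (dOp f q))
    have h7 : B r a' = B a r' := by
      rw [ha'def, hadef]
      exact (B_A A hA r r').symm
    rw [h7, h6, B_add_right, B_smul_right, B_comm a (dOp c r), ← B_dOp ψ a m, ← hudef,
      hmdef, B_sub_right, B_smul_right, B_comm u p]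
    ring
  linear_combination (1/2)*e1 + (1/2)*e2 + (1/2)*e3 + (1/2)*e4 + (1/2)*e5


lemma modEnergy_B (h : ℝ) (ω : Fin d → ℝ) (ψ₁ φ : ℝ → ℝ)
    (A : EuclideanSpace ℂ (Fin d) →L[ℂ] EuclideanSpace ℂ (Fin d))
    (q p : EuclideanSpace ℂ (Fin d)) :
    modEnergy h ω ψ₁ φ A q p = (1/2) * B (dOp ω q) (dOp ω q) + (1/2) * B p p
      + (1/2) * B (dOp (fun i => Real.cos (h * ω i)) (dOp (fun i => φ (h * ω i)) q))
          (A (dOp (fun i => φ (h * ω i)) q))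
      - (1/8) * h^2 * B (dOp (fun i => ψ₁ (h * ω i)) (A (dOp (fun i => φ (h * ω i)) q)))
          (dOp (fun i => ψ₁ (h * ω i)) (A (dOp (fun i => φ (h * ω i)) q))) := by
  unfold modEnergy
  rw [← B_self (dOp ω q), ← B_self p,
    ← B_self (dOp (fun i => ψ₁ (h * ω i)) (A (dOp (fun i => φ (h * ω i)) q)))]
  rfl

end MEC

/-- Theorem 1, exact conservation of a modified energy: for the linear system
`q̈ = -Ω²q - Aq` with `A` self-adjoint and filters satisfying `ψ₁ = sinc·φ`, the trigonometric
integrator exactly preserves the modified energy `ℋ`. -/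
theorem modified_energy_exact_conservation {d : ℕ} (h : ℝ) (hh : 0 < h)
    (ω : Fin d → ℝ) (hω : ∀ i, 0 ≤ ω i) (ψ₁ φ : ℝ → ℝ)
    (hfilter : ∀ ξ : ℝ, ψ₁ ξ = sinc ξ * φ ξ)
    (A : EuclideanSpace ℂ (Fin d) →L[ℂ] EuclideanSpace ℂ (Fin d))
    (hA : IsSelfAdjoint A)
    (q p : ℕ → EuclideanSpace ℂ (Fin d))
    (hq : ∀ n : ℕ, q (n + 1) = trigStepQ h ω ψ₁ φ A (q n) (p n))
    (hp : ∀ n : ℕ, p (n + 1) = trigStepP h ω ψ₁ φ A (q n) (p n)) :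
    ∀ n : ℕ, modEnergy h ω ψ₁ φ A (q (n + 1)) (p (n + 1)) = modEnergy h ω ψ₁ φ A (q n) (p n) := by
  intro n
  rw [hq n, hp n, MEC.modEnergy_B, MEC.modEnergy_B]
  exact MEC.oneStep h (fun i => Real.cos (h * ω i)) (fun i => Real.sin (h * ω i))
    (fun i => sinc (h * ω i)) (fun i => ψ₁ (h * ω i)) (fun i => φ (h * ω i)) ω
    (fun i => by show Real.sin (h * ω i) = h * ω i * sinc (h * ω i); rw [MEC.sin_eq_mul_sinc]) (fun i => hfilter _)
    (fun i => Real.cos_sq_add_sin_sq _) A hA (q n) (p n)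
    (trigStepQ h ω ψ₁ φ A (q n) (p n)) (trigStepP h ω ψ₁ φ A (q n) (p n)) rfl rfl
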